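/- Let k ≥ 2 and l ≥ 2 be integers and n = 2^k. Then the Ducci coefficient satisfies a_{(l+1)·2^{k−1}−1, l·2^{k−2}+1} ≡ 2^{l−1} (mod 2^l), where the second index is read modulo n; in particular this coefficient is not divisible by 2^l, so D^{(l+1)·2^{k−1}−1}(0,…,0,1) ≠ (0,…,0) in (ZMod 2^l)^{2^k}. -/

import Mathlib

/-- The Ducci coefficients `a_{r,s}`, with second index read modulo `n`:
`a_{0,1} = 1`, `a_{0,s} = 0` for `s ≠ 1`, and `a_{r,s} = a_{r-1,s} + a_{r-1,s-1}`. -/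
def ducciCoeff (n : ℕ) : ℕ → ZMod n → ℕ
  | 0, s => if s = 1 then 1 else 0
  | r + 1, s => ducciCoeff n r s + ducciCoeff n r (s - 1)

/-- The Ducci map on `(ZMod m)^n` with cyclic indexing:
`D(x_1,…,x_n) = (x_1+x_2, x_2+x_3, …, x_n+x_1)`. -/
def ducci (n m : ℕ) (x : Fin n → ZMod m) : Fin n → ZMod m :=
  fun i => x i + x ⟨(i.val + 1) % n, Nat.mod_lt _ i.pos⟩

open Finset AddMonoidAlgebra


namespace DucciAux

/-- congruence mod 2 in a commutative ring -/
def M2 {S : Type*} [CommRing S] (x y : S) : Prop := ∃ d, x = y + 2 * d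

namespace M2

variable {S : Type*} [CommRing S] {x x' y y' : S}

theorem refl (x : S) : M2 x x := ⟨0, by ring⟩

theorem symm (h : M2 x y) : M2 y x := by
  obtain ⟨d, rfl⟩ := h; exact ⟨-d, by ring⟩

theorem trans {z : S} (h : M2 x y) (h' : M2 y z) : M2 x z := by
  obtain ⟨d, rfl⟩ := h'; obtain ⟨e, he⟩ := h
  exact ⟨e + d, by rw [he]; ring⟩

theorem mul (h : M2 x x') (h' : M2 y y') : M2 (x * y) (x' * y') := by
  obtain ⟨d, rfl⟩ := h; obtain ⟨e, rfl⟩ := h'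
  exact ⟨x' * e + y' * d + 2 * d * e, by ring⟩

theorem pow (h : M2 x y) (c : ℕ) : M2 (x ^ c) (y ^ c) := by
  induction c with
  | zero => simpa using refl 1
  | succ c ih => rw [pow_succ, pow_succ]; exact ih.mul h

theorem sum {ι : Type*} (s : Finset ι) (f g : ι → S)
    (h : ∀ i ∈ s, M2 (f i) (g i)) : M2 (∑ i ∈ s, f i) (∑ i ∈ s, g i) := by
  classical
  induction s using Finset.induction with
  | empty => simpa using refl 0
  | @insert a s hx ih =>
    rw [Finset.sum_insert hx, Finset.sum_insert hx]
    obtain ⟨d, hd⟩ := h a (mem_insert_self _ _)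
    obtain ⟨e, he⟩ := ih fun i hi => h i (mem_insert_of_mem hi)
    exact ⟨d + e, by rw [hd, he]; ring⟩

end M2

theorem absorb {S : Type*} [CommRing S] {L : ℕ} (hL : 1 ≤ L) (h2 : (2 : S) ^ L = 0)
    {x y : S} (h : M2 x y) : 2 ^ (L - 1) * x = 2 ^ (L - 1) * y := by
  obtain ⟨d, rfl⟩ := h
  have h2' : (2 : S) ^ (L - 1) * 2 = 2 ^ L := by
    rw [← pow_succ]; congr 1; omega
  calc (2 : S) ^ (L-1) * (y + 2 * d) = 2 ^ (L-1) * y + (2 ^ (L-1) * 2) * d := by ring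
    _ = 2 ^ (L-1) * y := by rw [h2', h2]; ring

theorem oneT {S : Type*} [CommRing S] {T : S} (hT : T * T = 1) :
    ∀ j : ℕ, (1 + T) ^ (j + 1) = 2 ^ j * (1 + T)
  | 0 => by simp
  | j + 1 => by
    rw [pow_succ, oneT hT j]
    linear_combination (2 : S) ^ j * hT

end DucciAux


namespace DucciAux

variable (N M : ℕ)

abbrev A (N M : ℕ) := AddMonoidAlgebra (ZMod M) (ZMod N)

noncomputable def sp (c : ℕ) : A N M := AddMonoidAlgebra.single ((c : ZMod N)) 1

theorem sp_mul (a b : ℕ) : sp N M a * sp N M b = sp N M (a + b) := by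
  unfold sp
  rw [AddMonoidAlgebra.single_mul_single]
  push_cast
  rw [one_mul]

theorem sp_pow (a c : ℕ) : (sp N M a) ^ c = sp N M (a * c) := by
  unfold sp
  rw [AddMonoidAlgebra.single_pow, one_pow]
  congr 1
  push_cast [nsmul_eq_mul]
  ring

theorem sp_zero : sp N M 0 = 1 := by
  unfold sp
  rw [Nat.cast_zero, AddMonoidAlgebra.one_def]

theorem sp_self : sp N M N = 1 := by
  unfold sp
  rw [ZMod.natCast_self, AddMonoidAlgebra.one_def]

end DucciAux

namespace DucciAux

variable (N M : ℕ)

theorem four (j : ℕ) :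
    ∃ F : A N M, (1 + sp N M 1) ^ (2 ^ (j + 1))
      = 1 + sp N M (2 ^ (j + 1)) + 2 * sp N M (2 ^ j) + 4 * F := by
  induction j with
  | zero =>
    refine ⟨0, ?_⟩
    have h : sp N M 1 * sp N M 1 = sp N M 2 := sp_mul N M 1 1
    norm_num
    linear_combination h
  | succ j ih =>
    obtain ⟨F, hF⟩ := ih
    have hp : (1 + sp N M 1) ^ (2 ^ (j + 2)) = ((1 + sp N M 1) ^ (2 ^ (j + 1))) ^ 2 := by
      rw [show (2:ℕ) ^ (j + 2) = 2 ^ (j + 1) * 2 by ring, pow_mul]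
    have hbb : sp N M (2 ^ (j + 1)) * sp N M (2 ^ (j + 1)) = sp N M (2 ^ (j + 2)) := by
      rw [sp_mul]; congr 1; ring
    have hcc : sp N M (2 ^ j) * sp N M (2 ^ j) = sp N M (2 ^ (j + 1)) := by
      rw [sp_mul]; congr 1; ring
    refine ⟨sp N M (2 ^ j) * sp N M (2 ^ j) + sp N M (2 ^ j)
      + sp N M (2 ^ (j + 1)) * sp N M (2 ^ j) + 2 * F
      + 2 * sp N M (2 ^ (j + 1)) * F + 4 * F * F + 4 * sp N M (2 ^ j) * F, ?_⟩
    rw [hp, hF]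
    linear_combination hbb

theorem sq (j : ℕ) : M2 ((1 + sp N M 1) ^ (2 ^ j)) (1 + sp N M (2 ^ j)) := by
  cases j with
  | zero => simpa using M2.refl (1 + sp N M 1)
  | succ j =>
    obtain ⟨F, hF⟩ := four N M j
    exact ⟨sp N M (2 ^ j) + 2 * F, by rw [hF]; ring⟩

theorem geom : ∀ i : ℕ,
    M2 ((1 + sp N M 1) ^ (2 ^ i - 1)) (∑ t ∈ range (2 ^ i), sp N M t)
  | 0 => by
    simpa [sp_zero] using M2.refl (1 : A N M)
  | i + 1 => by
    have hsplit : (1 + sp N M 1) ^ (2 ^ (i + 1) - 1)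
        = (1 + sp N M 1) ^ (2 ^ i - 1) * (1 + sp N M 1) ^ (2 ^ i) := by
      rw [← pow_add]; congr 1
      have := Nat.one_le_two_pow (n := i); omega
    have h := (geom i).mul (sq N M i)
    rw [← hsplit] at h
    have heq : (∑ t ∈ range (2 ^ i), sp N M t) * (1 + sp N M (2 ^ i))
        = ∑ t ∈ range (2 ^ (i + 1)), sp N M t := by
      rw [show 2 ^ (i + 1) = 2 ^ i + 2 ^ i by ring, Finset.sum_range_add,
        mul_add, mul_one, Finset.sum_mul]
      congr 1
      refine Finset.sum_congr rfl fun t _ => ?_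
      rw [sp_mul]; congr 1; omega
    rwa [heq] at h

end DucciAux

namespace DucciAux

theorem sum_range_cast {N : ℕ} [NeZero N] {β : Type*} [AddCommMonoid β] (f : ZMod N → β) :
    ∑ t ∈ Finset.range N, f ((t : ℕ) : ZMod N) = ∑ s : ZMod N, f s := by
  refine Finset.sum_nbij' (fun t => ((t : ℕ) : ZMod N)) (fun s => s.val) ?_ ?_ ?_ ?_ ?_
  · intro a _; exact Finset.mem_univ _
  · intro s _
    exact Finset.mem_range.mpr (ZMod.val_lt s)
  · intro a ha
    exact ZMod.val_cast_of_lt (Finset.mem_range.mp ha)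
  · intro s _
    exact ZMod.natCast_zmod_val s
  · intro a _; rfl

variable (N M : ℕ)

theorem J_mul_sp [NeZero N] (c : ℕ) :
    (∑ t ∈ Finset.range N, sp N M t) * sp N M c = ∑ t ∈ Finset.range N, sp N M t := by
  rw [Finset.sum_mul]
  have h1 : ∀ t : ℕ, sp N M t * sp N M c = sp N M (t + c) := fun t => sp_mul N M t c
  simp only [h1]
  have h2 : ∀ t : ℕ, sp N M (t + c)
      = AddMonoidAlgebra.single (((t : ℕ) : ZMod N) + ((c : ℕ) : ZMod N)) (1 : ZMod M) := by
    intro t; unfold sp; push_cast; rfl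
  simp only [h2]
  rw [sum_range_cast (fun s => AddMonoidAlgebra.single (s + ((c : ℕ) : ZMod N)) (1 : ZMod M))]
  unfold sp
  rw [sum_range_cast (fun s => AddMonoidAlgebra.single s (1 : ZMod M))]
  exact Equiv.sum_comp (Equiv.addRight ((c : ℕ) : ZMod N))
      (fun s => AddMonoidAlgebra.single s (1 : ZMod M))

theorem cast_mul_J_apply [NeZero N] (x : ℕ) (s : ZMod N) :
    (((x : ℕ) : A N M) * ∑ t ∈ Finset.range N, sp N M t).coeff s = ((x : ℕ) : ZMod M) := by
  have h1 : ((x : ℕ) : A N M) * (∑ t ∈ Finset.range N, sp N M t)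
      = ∑ t ∈ Finset.range N, AddMonoidAlgebra.single ((t : ℕ) : ZMod N) ((x : ℕ) : ZMod M) := by
    rw [Finset.mul_sum]
    refine Finset.sum_congr rfl fun t _ => ?_
    rw [← nsmul_eq_mul]
    unfold sp
    rw [AddMonoidAlgebra.smul_single]
    congr 1
    rw [nsmul_eq_mul, mul_one]
  rw [h1]
  rw [AddMonoidAlgebra.coeff_sum, Finsupp.finset_sum_apply]
  have h2 : ∀ t : ℕ, (AddMonoidAlgebra.single ((t : ℕ) : ZMod N) ((x : ℕ) : ZMod M)).coeff s
      = if ((t : ℕ) : ZMod N) = s then ((x : ℕ) : ZMod M) else 0 := by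
    intro t; exact Finsupp.single_apply
  simp only [h2]
  rw [sum_range_cast (fun g => if g = s then ((x : ℕ) : ZMod M) else 0)]
  simp

theorem ducciCoeff_cast : ∀ (r : ℕ) (s : ZMod N),
    ((ducciCoeff N r s : ℕ) : ZMod M) = ((1 + sp N M 1) ^ r * sp N M 1).coeff s
  | 0, s => by
    rw [pow_zero, one_mul]
    unfold sp
    rw [ducciCoeff]
    rw [AddMonoidAlgebra.coeff_single, Finsupp.single_apply]
    split_ifs with h1 h2 h2 <;> simp_all
  | r + 1, s => by
    rw [ducciCoeff]
    push_cast
    rw [ducciCoeff_cast r s, ducciCoeff_cast r (s - 1)]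
    rw [pow_succ, mul_comm ((1 + sp N M 1) ^ r) (1 + sp N M 1), mul_assoc]
    rw [add_mul, one_mul]
    rw [AddMonoidAlgebra.coeff_add, Finsupp.add_apply]
    congr 1
    unfold sp
    rw [Nat.cast_one, AddMonoidAlgebra.coeff_single_mul_apply, one_mul]
    congr 1
    ring

end DucciAux

namespace DucciAux

theorem main_alg (k l : ℕ) (hk : 2 ≤ k) (hl : 2 ≤ l) :
    (1 + sp (2 ^ k) (2 ^ l) 1) ^ ((l + 1) * 2 ^ (k - 1) - 1) * sp (2 ^ k) (2 ^ l) 1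
      = ((2 ^ (l - 1) : ℕ) : A (2 ^ k) (2 ^ l)) * ∑ t ∈ Finset.range (2 ^ k), sp (2 ^ k) (2 ^ l) t := by
  obtain ⟨a, rfl⟩ : ∃ a, k = a + 2 := ⟨k - 2, by omega⟩
  haveI : NeZero (2 ^ (a + 2)) := ⟨by positivity⟩
  set N := 2 ^ (a + 2) with hN
  set R := ZMod (2 ^ l) with hR
  set u := 1 + sp N (2 ^ l) 1 with hu
  -- 2^l = 0 in the algebra
  have h2l : (2 : A N (2 ^ l)) ^ l = 0 := by
    have h1 : ((2 ^ l : ℕ) : A N (2 ^ l)) = algebraMap R (A N (2 ^ l)) ((2 ^ l : ℕ) : R) :=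
      (map_natCast _ _).symm
    have : (2 : A N (2 ^ l)) ^ l = ((2 ^ l : ℕ) : A N (2 ^ l)) := by push_cast; ring
    rw [this, h1, ZMod.natCast_self, map_zero]
  have hl1 : 1 ≤ l := by omega
  -- the structure of u^(2^(a+1))
  obtain ⟨F, hF⟩ := four N (2 ^ l) a
  set T := sp N (2 ^ l) (2 ^ (a + 1)) with hT
  have hTT : T * T = 1 := by
    rw [hT, sp_mul, show 2 ^ (a + 1) + 2 ^ (a + 1) = N by rw [hN]; ring, sp_self]
  set E : A N (2 ^ l) := sp N (2 ^ l) (2 ^ a) + 2 * F with hE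
  have hUm : u ^ (2 ^ (a + 1)) = (1 + T) + 2 * E := by
    rw [hu, hF, hT, hE]; ring
  -- binomial expansion of u^(2^(a+1) * l)
  have hml : u ^ (2 ^ (a + 1) * l)
      = ∑ c ∈ range (l + 1), (1 + T) ^ c * (2 * E) ^ (l - c) * (l.choose c : A N (2 ^ l)) := by
    rw [pow_mul, hUm, add_pow]
  set V : A N (2 ^ l) :=
    ∑ c ∈ range (l + 1), (if c = 0 then 0 else (l.choose c : A N (2 ^ l)) * E ^ (l - c)) with hV
  have hterm : ∀ c ∈ range (l + 1),
      (1 + T) ^ c * (2 * E) ^ (l - c) * (l.choose c : A N (2 ^ l))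
        = 2 ^ (l - 1) * ((1 + T) * (if c = 0 then 0 else (l.choose c : A N (2 ^ l)) * E ^ (l - c))) := by
    intro c hc
    rcases c with _ | c'
    · simp [mul_pow, h2l]
    · rw [if_neg (Nat.succ_ne_zero c')]
      rw [oneT hTT c', mul_pow]
      have h2s : (2 : A N (2 ^ l)) ^ c' * 2 ^ (l - (c' + 1)) = 2 ^ (l - 1) := by
        rw [← pow_add]; congr 1
        have := Finset.mem_range.mp hc; omega
      linear_combination ((1 + T) * E ^ (l - (c' + 1)) * (l.choose (c' + 1) : A N (2 ^ l))) * h2s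
  have h1 : u ^ (2 ^ (a + 1) * l) = 2 ^ (l - 1) * ((1 + T) * V) := by
    rw [hml, Finset.sum_congr rfl hterm, hV, ← Finset.mul_sum, ← Finset.mul_sum]
  -- exponent decomposition
  have hrdec : (l + 1) * 2 ^ (a + 2 - 1) - 1 = 2 ^ (a + 1) * l + (2 ^ (a + 1) - 1) := by
    have h12 : (1:ℕ) ≤ 2 ^ (a + 1) := Nat.one_le_two_pow
    rw [show a + 2 - 1 = a + 1 from rfl, add_mul, one_mul,
      Nat.add_sub_assoc h12, Nat.mul_comm]
  have hsplit : u ^ ((l + 1) * 2 ^ (a + 2 - 1) - 1)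
      = u ^ (2 ^ (a + 1) * l) * u ^ (2 ^ (a + 1) - 1) := by
    rw [← pow_add, hrdec]
  -- the mod-2 reduction
  set J : A N (2 ^ l) := ∑ t ∈ Finset.range N, sp N (2 ^ l) t with hJ
  set V2 : A N (2 ^ l) :=
    ∑ c ∈ range (l + 1), (if c = 0 then 0 else (l.choose c : A N (2 ^ l)) * sp N (2 ^ l) (2 ^ a * (l - c))) with hV2
  have hVV2 : M2 V V2 := by
    refine M2.sum _ _ _ fun c _ => ?_
    rcases c with _ | c'
    · exact M2.refl _
    · rw [if_neg (Nat.succ_ne_zero c'), if_neg (Nat.succ_ne_zero c')]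
      refine (M2.refl _).mul ?_
      have hEq : M2 E (sp N (2 ^ l) (2 ^ a)) := ⟨F, by rw [hE]⟩
      have := hEq.pow (l - (c' + 1))
      rwa [sp_pow] at this
  have hMX : M2 ((1 + T) * V * u ^ (2 ^ (a + 1) - 1)) (J * V2) := by
    have m1 : M2 (1 + T) (u ^ (2 ^ (a + 1))) := by
      have := (sq N (2 ^ l) (a + 1)).symm
      rwa [← hT, ← hu] at this
    have m3 : M2 (u ^ (2 ^ (a + 1) - 1)) (u ^ (2 ^ (a + 1) - 1)) := M2.refl _
    have mall := (m1.mul hVV2).mul m3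
    have heq : u ^ (2 ^ (a + 1)) * V2 * u ^ (2 ^ (a + 1) - 1)
        = u ^ (2 ^ (a + 2) - 1) * V2 := by
      rw [mul_comm (u ^ (2 ^ (a + 1))) V2, mul_assoc, ← pow_add]
      rw [show 2 ^ (a + 1) + (2 ^ (a + 1) - 1) = 2 ^ (a + 2) - 1 by
        have h12 : (1:ℕ) ≤ 2 ^ (a + 1) := Nat.one_le_two_pow
        have : (2:ℕ) ^ (a + 2) = 2 ^ (a + 1) + 2 ^ (a + 1) := by ring
        omega]
      ring
    rw [heq] at mall
    have mJ : M2 (u ^ (2 ^ (a + 2) - 1) * V2) (J * V2) :=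
      (geom N (2 ^ l) (a + 2)).mul (M2.refl V2)
    exact mall.trans mJ
  -- J * V2 = (2^l - 1) * J
  have hJV2 : J * V2 = ((2 ^ l - 1 : ℕ) : A N (2 ^ l)) * J := by
    rw [hV2, Finset.mul_sum]
    have hterm2 : ∀ c ∈ range (l + 1),
        J * (if c = 0 then 0 else (l.choose c : A N (2 ^ l)) * sp N (2 ^ l) (2 ^ a * (l - c)))
          = (((if c = 0 then 0 else l.choose c : ℕ)) : A N (2 ^ l)) * J := by
      intro c _
      rcases c with _ | c'
      · simp
      · rw [if_neg (Nat.succ_ne_zero c'), if_neg (Nat.succ_ne_zero c')]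
        rw [mul_left_comm, hJ, J_mul_sp]
    rw [Finset.sum_congr rfl hterm2, ← Finset.sum_mul]
    congr 1
    rw [← Nat.cast_sum]
    congr 1
    have h1' := Nat.sum_range_choose l
    rw [Finset.sum_range_succ'] at h1' ⊢
    simp only [Nat.succ_ne_zero, if_neg, if_pos, Nat.choose_zero_right] at h1' ⊢
    simp only [reduceIte]
    omega
  -- scalar arithmetic
  have h2R : (2 : R) ^ l = 0 := by
    have : (2 : R) ^ l = ((2 ^ l : ℕ) : R) := by push_cast; ring
    rw [this]; exact ZMod.natCast_self (2 ^ l)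
  have e1 : ((2 ^ (l - 1) * (2 ^ l - 1) : ℕ) : R) = ((2 ^ (l - 1) : ℕ) : R) := by
    have hhalf : (2 : R) ^ (l - 1) + (2 : R) ^ (l - 1) = 0 := by
      have h3 : (2 : R) ^ (l - 1) + 2 ^ (l - 1) = 2 ^ l := by
        rw [← two_mul, ← pow_succ']; congr 1; omega
      rw [h3, h2R]
    have hc1 : (1:ℕ) ≤ 2 ^ l := Nat.one_le_two_pow
    push_cast [hc1]
    erw [Nat.cast_mul, Nat.cast_sub hc1]
    push_cast
    rw [h2R]
    linear_combination -hhalf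
  have hsc : (2 : A N (2 ^ l)) ^ (l - 1) * ((2 ^ l - 1 : ℕ) : A N (2 ^ l))
      = ((2 ^ (l - 1) : ℕ) : A N (2 ^ l)) := by
    have e2 : (2 : A N (2 ^ l)) ^ (l - 1) * ((2 ^ l - 1 : ℕ) : A N (2 ^ l))
        = ((2 ^ (l - 1) * (2 ^ l - 1) : ℕ) : A N (2 ^ l)) := by push_cast; ring
    rw [e2,
      show ((2 ^ (l - 1) * (2 ^ l - 1) : ℕ) : A N (2 ^ l))
        = algebraMap R (A N (2 ^ l)) ((2 ^ (l - 1) * (2 ^ l - 1) : ℕ) : R)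
        from (map_natCast (algebraMap R (A N (2 ^ l))) _).symm,
      e1]
    exact map_natCast _ _
  have hfinal1 : u ^ ((l + 1) * 2 ^ (a + 2 - 1) - 1)
      = 2 ^ (l - 1) * (((2 ^ l - 1 : ℕ) : A N (2 ^ l)) * J) := by
    rw [hsplit, h1, mul_assoc, absorb hl1 h2l hMX, hJV2]
  calc u ^ ((l + 1) * 2 ^ (a + 2 - 1) - 1) * sp N (2 ^ l) 1
      = 2 ^ (l - 1) * ((2 ^ l - 1 : ℕ) : A N (2 ^ l)) * (J * sp N (2 ^ l) 1) := by
        rw [hfinal1]; ring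
    _ = 2 ^ (l - 1) * ((2 ^ l - 1 : ℕ) : A N (2 ^ l)) * J := by
        rw [hJ, J_mul_sp]
    _ = ((2 ^ (l - 1) : ℕ) : A N (2 ^ l)) * J := by rw [hsc]

end DucciAux

namespace DucciAux

theorem iter_eq (N m' : ℕ) (hN : 1 < N) : ∀ (r : ℕ) (i : Fin N),
    (ducci N m')^[r] (fun i : Fin N => if (i : ℕ) = N - 1 then (1 : ZMod m') else 0) i
      = ((ducciCoeff N r (-(i.val : ZMod N)) : ℕ) : ZMod m')
  | 0, i => by
    haveI : NeZero N := ⟨by omega⟩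
    rw [Function.iterate_zero, id_eq, ducciCoeff]
    rw [Nat.cast_ite, Nat.cast_one, Nat.cast_zero]
    congr 1
    have hiff : (i : ℕ) = N - 1 ↔ -((i : ℕ) : ZMod N) = 1 := by
      constructor
      · intro h
        rw [h, Nat.cast_sub (by omega), ZMod.natCast_self, Nat.cast_one]
        ring
      · intro h
        have h2 : ((i : ℕ) : ZMod N) = ((N - 1 : ℕ) : ZMod N) := by
          rw [Nat.cast_sub (by omega), ZMod.natCast_self]
          linear_combination -h
        have := congrArg ZMod.val h2
        rwa [ZMod.val_cast_of_lt i.isLt, ZMod.val_cast_of_lt (by omega)] at this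
    simp only [eq_iff_iff]
    exact hiff
  | r + 1, i => by
    rw [Function.iterate_succ_apply']
    show (ducci N m' ((ducci N m')^[r] _)) i = _
    rw [ducci]
    rw [iter_eq N m' hN r i, iter_eq N m' hN r ⟨((i : ℕ) + 1) % N, Nat.mod_lt _ i.pos⟩]
    rw [ducciCoeff]
    push_cast
    have harg : -((((i : ℕ) + 1) % N : ℕ) : ZMod N) = -(((i : ℕ) : ZMod N)) - 1 := by
      rw [ZMod.natCast_mod]; push_cast; ring
    rw [harg]

end DucciAux


/-- For `n = 2^k`, `k ≥ 2`, `l ≥ 2`: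
`a_{(l+1)·2^(k-1)-1, l·2^(k-2)+1} ≡ 2^(l-1) (mod 2^l)`, and in particular
`D^{(l+1)·2^(k-1)-1}(0,…,0,1) ≠ (0,…,0)` in `(ZMod 2^l)^(2^k)`. -/
theorem ducciCoeff_before_vanish (k l : ℕ) (hk : 2 ≤ k) (hl : 2 ≤ l) :
    ducciCoeff (2 ^ k) ((l + 1) * 2 ^ (k - 1) - 1)
        ((l * 2 ^ (k - 2) + 1 : ℕ) : ZMod (2 ^ k)) ≡ 2 ^ (l - 1) [MOD 2 ^ l] ∧
      (ducci (2 ^ k) (2 ^ l))^[(l + 1) * 2 ^ (k - 1) - 1]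
        (fun i : Fin (2 ^ k) => if (i : ℕ) = 2 ^ k - 1 then (1 : ZMod (2 ^ l)) else 0) ≠ 0 := by
  haveI : NeZero (2 ^ k) := ⟨by positivity⟩
  have key : ∀ s : ZMod (2 ^ k),
      ((ducciCoeff (2 ^ k) ((l + 1) * 2 ^ (k - 1) - 1) s : ℕ) : ZMod (2 ^ l))
        = ((2 ^ (l - 1) : ℕ) : ZMod (2 ^ l)) := by
    intro s
    rw [DucciAux.ducciCoeff_cast, DucciAux.main_alg k l hk hl,
      DucciAux.cast_mul_J_apply]
  constructor
  · exact (ZMod.natCast_eq_natCast_iff _ _ _).mp (key _)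
  · intro h
    have h0 := congrFun h ⟨0, by positivity⟩
    rw [DucciAux.iter_eq (2 ^ k) (2 ^ l) (by
      have : (2:ℕ)^2 ≤ 2^k := Nat.pow_le_pow_right (by norm_num) hk
      omega), key, Pi.zero_apply] at h0
    rw [ZMod.natCast_eq_zero_iff] at h0
    have h2 := Nat.le_of_dvd (by positivity) h0
    have h3 : (2:ℕ) ^ (l - 1) < 2 ^ l := Nat.pow_lt_pow_right one_lt_two (by omega)
    omega
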